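/- Let θ be an irrational real number with regular continued fraction expansion θ = [a_0; a_1, a_2, ...] and convergents p_n/q_n. Then μ(θ) = 2 + limsup_{n→∞} (log a_{n+1})/(log q_n). -/

import Mathlib

open scoped BigOperators

noncomputable section


section Aux
variable (a p q : ℕ → ℤ)
variable (ha : ∀ n, 1 ≤ n → 1 ≤ a n)
variable (hq0 : q 0 = 1) (hq1 : q 1 = a 1)
variable (hqrec : ∀ n, q (n + 2) = a (n + 2) * q (n + 1) + q n)

include ha hq0 hq1 hqrec

lemma L1 : ∀ n, 1 ≤ q n := by
  have key : ∀ n, 1 ≤ q n ∧ 1 ≤ q (n+1) := by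
    intro n
    induction n with
    | zero => exact ⟨by omega, by rw [hq1]; exact ha 1 (by omega)⟩
    | succ k ih =>
      refine ⟨ih.2, ?_⟩
      have h := hqrec k
      have h2 := ha (k+2) (by omega)
      nlinarith [ih.1, ih.2]
  exact fun n => (key n).1

lemma L3 : ∀ n, q n ≤ q (n+1) := by
  intro n
  match n with
  | 0 => rw [hq0, hq1]; exact ha 1 (by omega)
  | (k+1) =>
    have h := hqrec k
    have h2 := ha (k+2) (by omega)
    have h3 := L1 a q ha hq0 hq1 hqrec k
    have h4 := L1 a q ha hq0 hq1 hqrec (k+1)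
    nlinarith

lemma Lmono : ∀ m n : ℕ, m ≤ n → q m ≤ q n := by
  intro m n h
  induction n with
  | zero => have : m = 0 := by omega
            simp [this]
  | succ k ih =>
    rcases Nat.lt_or_ge m (k+1) with h'|h'
    · exact le_trans (ih (by omega)) (L3 a q ha hq0 hq1 hqrec k)
    · have : m = k+1 := by omega
      simp [this]

lemma Lstrict : ∀ m n : ℕ, 1 ≤ m → m < n → q m < q n := by
  intro m n h1 h2
  have step : ∀ k : ℕ, 1 ≤ k → q k < q (k+1) := by
    intro k hk
    match k, hk with
    | (j+1), _ =>
      have h := hqrec j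
      have h2 := ha (j+2) (by omega)
      have h3 := L1 a q ha hq0 hq1 hqrec j
      have h4 := L1 a q ha hq0 hq1 hqrec (j+1)
      nlinarith
  calc q m < q (m+1) := step m h1
    _ ≤ q n := Lmono a q ha hq0 hq1 hqrec (m+1) n (by omega)

lemma L2 : ∀ n : ℕ, (n : ℤ) ≤ q n := by
  intro n
  match n with
  | 0 => omega
  | 1 => have := L1 a q ha hq0 hq1 hqrec 1; omega
  | (k+2) =>
    induction k with
    | zero =>
      have h := hqrec 0
      have := ha 2 (by omega)
      have := L1 a q ha hq0 hq1 hqrec 1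
      push_cast; nlinarith
    | succ j ih =>
      have h := hqrec (j+1)
      have h2 := ha (j+3) (by omega)
      have h3 := L1 a q ha hq0 hq1 hqrec (j+1)
      have h4 : ((j:ℤ)+2) ≤ q (j+2) := by exact_mod_cast ih
      push_cast
      nlinarith

lemma L11 : ∀ n, 1 ≤ n → a (n+1) * q n ≤ q (n+1) := by
  intro n hn
  match n, hn with
  | (k+1), _ =>
    have h := hqrec k
    have h3 := L1 a q ha hq0 hq1 hqrec k
    have h4 := L1 a q ha hq0 hq1 hqrec (k+1)
    have h5 := ha (k+2) (by omega)
    nlinarith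

lemma L12 : ∀ n, q (n+1) ≤ 2 * a (n+1) * q n := by
  intro n
  match n with
  | 0 =>
    rw [hq0, hq1]
    have := ha 1 (by omega)
    nlinarith
  | (k+1) =>
    have h := hqrec k
    have h2 := ha (k+2) (by omega)
    have h3 := L1 a q ha hq0 hq1 hqrec k
    have h4 := Lmono a q ha hq0 hq1 hqrec k (k+1) (by omega)
    nlinarith

end Aux

section Det
variable (a p q : ℕ → ℤ)
variable (hq0 : q 0 = 1) (hq1 : q 1 = a 1)
variable (hqrec : ∀ n, q (n + 2) = a (n + 2) * q (n + 1) + q n)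
variable (hp0 : p 0 = a 0) (hp1 : p 1 = a 1 * a 0 + 1)
variable (hprec : ∀ n, p (n + 2) = a (n + 2) * p (n + 1) + p n)

include hq0 hq1 hqrec hp0 hp1 hprec

lemma L5 : ∀ n, p (n+1) * q n - p n * q (n+1) = (-1)^n := by
  intro n
  induction n with
  | zero => rw [hq0, hq1, hp0, hp1]; ring
  | succ k ih =>
    rw [hqrec k, hprec k, pow_succ]
    nlinarith [ih]

end Det

section RealAux
variable (a p q : ℕ → ℤ) (θ : ℝ)
variable (ha : ∀ n, 1 ≤ n → 1 ≤ a n)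
variable (hq0 : q 0 = 1) (hq1 : q 1 = a 1)
variable (hqrec : ∀ n, q (n + 2) = a (n + 2) * q (n + 1) + q n)
variable (hp0 : p 0 = a 0) (hp1 : p 1 = a 1 * a 0 + 1)
variable (hprec : ∀ n, p (n + 2) = a (n + 2) * p (n + 1) + p n)
variable (hconv : Filter.Tendsto (fun n => (p n : ℝ) / (q n : ℝ)) Filter.atTop (nhds θ))

include ha hq0 hq1 hqrec hp0 hp1 hprec

omit hp0 hp1 hprec in
lemma Lqpos : ∀ n, (0:ℝ) < (q n : ℝ) := by
  intro n
  have := L1 a q ha hq0 hq1 hqrec n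
  exact_mod_cast lt_of_lt_of_le one_pos (by exact_mod_cast this)

lemma Ld1 : ∀ n, (p (n+1) : ℝ)/(q (n+1)) - (p n : ℝ)/(q n)
    = (-1)^n / ((q n : ℝ) * (q (n+1))) := by
  intro n
  have h5 : ((p (n+1) : ℝ) * q n - (p n : ℝ) * q (n+1)) = (-1)^n := by
    exact_mod_cast congrArg (Int.cast : ℤ → ℝ) (L5 a p q hq0 hq1 hqrec hp0 hp1 hprec n)
  have h1 := (Lqpos a q ha hq0 hq1 hqrec n).ne'
  have h2 := (Lqpos a q ha hq0 hq1 hqrec (n+1)).ne'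
  rw [div_sub_div _ _ h2 h1, show (p (n+1):ℝ) * q n - (q (n+1):ℝ) * p n
    = (p (n+1):ℝ) * q n - (p n:ℝ) * q (n+1) by ring, h5]
  rw [mul_comm ((q (n+1)):ℝ) ((q n):ℝ)]

lemma Ld2 : ∀ n, (p (n+2) : ℝ)/(q (n+2)) - (p n : ℝ)/(q n)
    = (a (n+2) : ℝ) * (-1)^n / ((q n : ℝ) * (q (n+2))) := by
  intro n
  have h5 : ((p (n+2) : ℝ) * q n - (p n : ℝ) * q (n+2)) = (a (n+2):ℝ) * (-1)^n := by
    have : p (n+2) * q n - p n * q (n+2) = a (n+2) * (-1)^n := by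
      have := L5 a p q hq0 hq1 hqrec hp0 hp1 hprec n
      rw [hqrec n, hprec n]
      linear_combination (a (n+2) : ℤ) * this
    exact_mod_cast congrArg (Int.cast : ℤ → ℝ) this
  have h1 := (Lqpos a q ha hq0 hq1 hqrec n).ne'
  have h2 := (Lqpos a q ha hq0 hq1 hqrec (n+2)).ne'
  rw [div_sub_div _ _ h2 h1, show (p (n+2):ℝ) * q n - (q (n+2):ℝ) * p n
    = (p (n+2):ℝ) * q n - (p n:ℝ) * q (n+2) by ring, h5]
  rw [mul_comm ((q (n+2)):ℝ) ((q n):ℝ)]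

include hconv

lemma Leven : ∀ k, (p (2*k) : ℝ)/(q (2*k)) < θ := by
  have hmono : StrictMono (fun k => (p (2*k) : ℝ)/(q (2*k))) := by
    apply strictMono_nat_of_lt_succ
    intro k
    have hd := Ld2 a p q ha hq0 hq1 hqrec hp0 hp1 hprec (2*k)
    have h1 := Lqpos a q ha hq0 hq1 hqrec (2*k)
    have h2 := Lqpos a q ha hq0 hq1 hqrec (2*k+2)
    have h3 : (1:ℝ) ≤ (a (2*k+2) : ℝ) := by exact_mod_cast ha (2*k+2) (by omega)
    have hpow : ((-1:ℝ))^(2*k) = 1 := by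
      rw [pow_mul]; norm_num
    have : (2*(k+1)) = 2*k+2 := by omega
    rw [this]
    have hpos : (0:ℝ) < (a (2*k+2) : ℝ) * (-1)^(2*k) / ((q (2*k) : ℝ) * (q (2*k+2))) := by
      rw [hpow]
      positivity
    linarith [hd, hpos]
  have h2 : Filter.Tendsto (fun m => (p (2*m) : ℝ)/(q (2*m))) Filter.atTop (nhds θ) :=
    hconv.comp (Filter.tendsto_atTop_atTop.mpr (fun b => ⟨b, fun m hm => by omega⟩))
  intro k
  have hle : (p (2*(k+1)) : ℝ)/(q (2*(k+1))) ≤ θ := by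
    apply ge_of_tendsto h2
    filter_upwards [Filter.eventually_ge_atTop (k+1)] with m hm
    exact hmono.monotone hm
  exact lt_of_lt_of_le (hmono (by omega : k < k+1)) hle

lemma Lodd : ∀ k, θ < (p (2*k+1) : ℝ)/(q (2*k+1)) := by
  have hmono : StrictAnti (fun k => (p (2*k+1) : ℝ)/(q (2*k+1))) := by
    apply strictAnti_nat_of_succ_lt
    intro k
    have hd := Ld2 a p q ha hq0 hq1 hqrec hp0 hp1 hprec (2*k+1)
    have h1 := Lqpos a q ha hq0 hq1 hqrec (2*k+1)
    have h2 := Lqpos a q ha hq0 hq1 hqrec (2*k+3)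
    have h3 : (1:ℝ) ≤ (a (2*k+3) : ℝ) := by exact_mod_cast ha (2*k+3) (by omega)
    have hpow : ((-1:ℝ))^(2*k+1) = -1 := by
      rw [pow_succ, pow_mul]; norm_num
    have : (2*(k+1)+1) = 2*k+1+2 := by omega
    rw [this]
    have hneg : (a (2*k+1+2) : ℝ) * (-1)^(2*k+1) / ((q (2*k+1) : ℝ) * (q (2*k+1+2))) < 0 := by
      rw [hpow]
      have : (2*k+1+2) = 2*k+3 := by omega
      rw [this]
      have hnum : (a (2*k+3):ℝ) * (-1) < 0 := by nlinarith
      exact div_neg_of_neg_of_pos hnum (by positivity)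
    linarith [hd, hneg]
  have h2 : Filter.Tendsto (fun m => (p (2*m+1) : ℝ)/(q (2*m+1))) Filter.atTop (nhds θ) :=
    hconv.comp (Filter.tendsto_atTop_atTop.mpr (fun b => ⟨b, fun m hm => by omega⟩))
  intro k
  have hle : θ ≤ (p (2*(k+1)+1) : ℝ)/(q (2*(k+1)+1)) := by
    apply le_of_tendsto h2
    filter_upwards [Filter.eventually_ge_atTop (k+1)] with m hm
    exact hmono.antitone hm
  exact lt_of_le_of_lt hle (hmono (by omega : k < k+1))

lemma Mbound : ∀ n, (1:ℝ)/(2*((q n:ℝ)*(q (n+1):ℝ))) < (-1)^n * (θ - (p n:ℝ)/(q n:ℝ))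
    ∧ (-1)^n * (θ - (p n:ℝ)/(q n:ℝ)) < 1/((q n:ℝ)*(q (n+1):ℝ)) := by
  intro n
  have hqn := Lqpos a q ha hq0 hq1 hqrec n
  have hqn1 := Lqpos a q ha hq0 hq1 hqrec (n+1)
  have hqn2 := Lqpos a q ha hq0 hq1 hqrec (n+2)
  have ha2 : (1:ℝ) ≤ (a (n+2) : ℝ) := by exact_mod_cast ha (n+2) (by omega)
  have hL12 : ((q (n+2)):ℝ) ≤ 2 * (a (n+2):ℝ) * (q (n+1):ℝ) := by
    exact_mod_cast L12 a q ha hq0 hq1 hqrec (n+1)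
  have hd1 := Ld1 a p q ha hq0 hq1 hqrec hp0 hp1 hprec n
  have hd2 := Ld2 a p q ha hq0 hq1 hqrec hp0 hp1 hprec n
  have hkey : (1:ℝ)/(2*((q n:ℝ)*(q (n+1):ℝ))) ≤ (a (n+2):ℝ) / ((q n:ℝ)*(q (n+2):ℝ)) := by
    rw [div_le_div_iff₀ (by positivity) (by positivity)]
    nlinarith
  rcases Nat.even_or_odd n with ⟨k, hk⟩ | ⟨k, hk⟩
  · -- n even
    have hpow : ((-1:ℝ))^n = 1 := by
      rw [hk, ← two_mul, pow_mul]; norm_num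
    have hlow : (p (n+2) : ℝ)/(q (n+2):ℝ) < θ := by
      have := Leven a p q θ ha hq0 hq1 hqrec hp0 hp1 hprec hconv (k+1)
      have h2 : 2*(k+1) = n+2 := by omega
      rwa [h2] at this
    have hup : θ < (p (n+1) : ℝ)/(q (n+1):ℝ) := by
      have := Lodd a p q θ ha hq0 hq1 hqrec hp0 hp1 hprec hconv k
      have h2 : 2*k+1 = n+1 := by omega
      rwa [h2] at this
    have heq2 : (p (n+2):ℝ)/(q (n+2):ℝ) - (p n:ℝ)/(q n:ℝ)
        = (a (n+2):ℝ)/((q n:ℝ)*(q (n+2):ℝ)) := by rw [hd2, hpow]; ring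
    have heq1 : (p (n+1):ℝ)/(q (n+1):ℝ) - (p n:ℝ)/(q n:ℝ)
        = 1/((q n:ℝ)*(q (n+1):ℝ)) := by rw [hd1, hpow]
    rw [hpow]
    constructor
    · linarith [hkey, hlow, heq2]
    · linarith [hup, heq1]
  · -- n odd
    have hpow : ((-1:ℝ))^n = -1 := by
      rw [hk, pow_succ, pow_mul]; norm_num
    have hup : (p (n+1) : ℝ)/(q (n+1):ℝ) < θ := by
      have := Leven a p q θ ha hq0 hq1 hqrec hp0 hp1 hprec hconv (k+1)
      have h2 : 2*(k+1) = n+1 := by omega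
      rwa [h2] at this
    have hlow : θ < (p (n+2) : ℝ)/(q (n+2):ℝ) := by
      have := Lodd a p q θ ha hq0 hq1 hqrec hp0 hp1 hprec hconv (k+1)
      have h2 : 2*(k+1)+1 = n+2 := by omega
      rwa [h2] at this
    have heq2 : (p (n+2):ℝ)/(q (n+2):ℝ) - (p n:ℝ)/(q n:ℝ)
        = -((a (n+2):ℝ)/((q n:ℝ)*(q (n+2):ℝ))) := by rw [hd2, hpow]; ring
    have heq1 : (p (n+1):ℝ)/(q (n+1):ℝ) - (p n:ℝ)/(q n:ℝ)
        = -(1/((q n:ℝ)*(q (n+1):ℝ))) := by rw [hd1, hpow]; ring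
    rw [hpow]
    constructor
    · linarith [hkey, hlow, heq2]
    · linarith [hup, heq1]

lemma Me : ∀ n, (1:ℝ)/(2*(q (n+1):ℝ)) < (-1)^n * ((q n:ℝ)*θ - (p n:ℝ))
    ∧ (-1)^n * ((q n:ℝ)*θ - (p n:ℝ)) < 1/(q (n+1):ℝ) := by
  intro n
  have hqn := Lqpos a q ha hq0 hq1 hqrec n
  have hqn1 := Lqpos a q ha hq0 hq1 hqrec (n+1)
  obtain ⟨h1, h2⟩ := Mbound a p q θ ha hq0 hq1 hqrec hp0 hp1 hprec hconv n
  have he2 : (q n:ℝ) * ((-1)^n * (θ - (p n:ℝ)/(q n:ℝ)))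
      = (-1)^n * ((q n:ℝ)*θ - (p n:ℝ)) := by
    field_simp
  constructor
  · have h3 := mul_lt_mul_of_pos_left h1 hqn
    have he : (q n:ℝ) * ((1:ℝ)/(2*((q n:ℝ)*(q (n+1):ℝ)))) = 1/(2*(q (n+1):ℝ)) := by
      field_simp
    linarith [h3, he, he2]
  · have h3 := mul_lt_mul_of_pos_left h2 hqn
    have he : (q n:ℝ) * ((1:ℝ)/((q n:ℝ)*(q (n+1):ℝ))) = 1/(q (n+1):ℝ) := by
      field_simp
    linarith [h3, he, he2]

set_option maxHeartbeats 1600000 in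
lemma LBA : ∀ n (P Q : ℤ), 1 ≤ Q → Q < q (n+1) →
    |(q n:ℝ)*θ - (p n:ℝ)| ≤ |(Q:ℝ)*θ - (P:ℝ)| := by
  intro n P Q hQ1 hQlt
  have hdet := L5 a p q hq0 hq1 hqrec hp0 hp1 hprec n
  have hqnZ := L1 a q ha hq0 hq1 hqrec n
  have hqn1Z := L1 a q ha hq0 hq1 hqrec (n+1)
  obtain ⟨x, hxdef⟩ : ∃ t : ℤ, t = (-1)^n * (Q * p (n+1) - P * q (n+1)) := ⟨_, rfl⟩
  obtain ⟨y, hydef⟩ : ∃ t : ℤ, t = (-1)^n * (P * q n - Q * p n) := ⟨_, rfl⟩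
  have hsq : ((-1:ℤ)^n)*((-1:ℤ)^n) = 1 := by
    rw [← pow_add, ← two_mul, pow_mul]; norm_num
  have hQx : x * q n + y * q (n+1) = Q := by
    rw [hxdef, hydef]
    linear_combination ((-1:ℤ)^n * Q) * hdet + Q * hsq
  have hPx : x * p n + y * p (n+1) = P := by
    rw [hxdef, hydef]
    linear_combination ((-1:ℤ)^n * P) * hdet + P * hsq
  clear hxdef hydef
  set en : ℝ := (q n:ℝ)*θ - (p n:ℝ) with hen
  set en1 : ℝ := (q (n+1):ℝ)*θ - (p (n+1):ℝ) with hen1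
  have hiden : (Q:ℝ)*θ - (P:ℝ) = (x:ℝ)*en + (y:ℝ)*en1 := by
    have h1 : (x:ℝ) * (q n:ℝ) + (y:ℝ) * (q (n+1):ℝ) = (Q:ℝ) := by exact_mod_cast hQx
    have h2 : (x:ℝ) * (p n:ℝ) + (y:ℝ) * (p (n+1):ℝ) = (P:ℝ) := by exact_mod_cast hPx
    rw [hen, hen1]
    linear_combination h2 - θ * h1
  obtain ⟨hme1, _⟩ := Me a p q θ ha hq0 hq1 hqrec hp0 hp1 hprec hconv n
  obtain ⟨hme2, _⟩ := Me a p q θ ha hq0 hq1 hqrec hp0 hp1 hprec hconv (n+1)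
  have hqn1pos := Lqpos a q ha hq0 hq1 hqrec (n+1)
  have hqn2pos := Lqpos a q ha hq0 hq1 hqrec (n+2)
  have hsen : 0 < (-1:ℝ)^n * en := lt_trans (by positivity) hme1
  have hsen1 : 0 < (-1:ℝ)^(n+1) * en1 := lt_trans (by positivity) hme2
  have hRsq : ((-1:ℝ)^n)*((-1:ℝ)^n) = 1 := by
    rw [← pow_add, ← two_mul, pow_mul]; norm_num
  have henen1 : en * en1 < 0 := by
    have h1 : ((-1:ℝ)^n * en) * ((-1:ℝ)^(n+1) * en1) > 0 := mul_pos hsen hsen1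
    have h2 : ((-1:ℝ)^n * en) * ((-1:ℝ)^(n+1) * en1) = - (en * en1) := by
      rw [pow_succ]
      linear_combination (-(en*en1)) * hRsq
    nlinarith
  rw [hiden]
  rcases eq_or_ne y 0 with hy | hy
  · have hx1 : 1 ≤ x := by
      rcases le_or_gt 1 x with h | h
      · exact h
      · exfalso
        rw [hy] at hQx
        nlinarith [hQx, hqnZ, hQ1]
    have hxR : (1:ℝ) ≤ (x:ℝ) := by exact_mod_cast hx1
    have hyR : (y:ℝ) = 0 := by exact_mod_cast hy
    rw [hyR, zero_mul, add_zero, abs_mul]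
    nlinarith [abs_nonneg en, abs_of_pos (lt_of_lt_of_le one_pos hxR)]
  · rcases eq_or_ne x 0 with hx | hx
    · exfalso
      rw [hx] at hQx
      have hy1 : 1 ≤ y := by nlinarith [hQx, hqn1Z, hQ1]
      nlinarith [hQx, hqn1Z]
    · have hxy : x * y < 0 := by
        rcases lt_or_gt_of_ne hx with hxneg | hxpos
        · rcases lt_or_gt_of_ne hy with hyneg | hypos
          · exfalso
            have hx' : x ≤ -1 := by omega
            have hy' : y ≤ -1 := by omega
            have h1 : x * q n ≤ -1 := by nlinarith
            have h2 : y * q (n+1) ≤ -1 := by nlinarith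
            linarith [hQx, h1, h2, hQ1]
          · exact mul_neg_of_neg_of_pos hxneg hypos
        · rcases lt_or_gt_of_ne hy with hyneg | hypos
          · exact mul_neg_of_pos_of_neg hxpos hyneg
          · exfalso
            have hx' : 1 ≤ x := by omega
            have hy' : 1 ≤ y := by omega
            have h1 : q n ≤ x * q n := by nlinarith
            have h2 : q (n+1) ≤ y * q (n+1) := by nlinarith
            linarith [hQx, h1, h2, hQlt, hqnZ]
      have hxyR : (x:ℝ) * (y:ℝ) < 0 := by exact_mod_cast hxy
      have hprod : 0 < ((x:ℝ)*en) * ((y:ℝ)*en1) := by nlinarith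
      have hxabs : (1:ℝ) ≤ |(x:ℝ)| := by
        have h := Int.one_le_abs hx
        calc (1:ℝ) ≤ ((|x| : ℤ) : ℝ) := by exact_mod_cast h
          _ = |(x:ℝ)| := by push_cast; simp
      have key : |en| ≤ |(x:ℝ)*en| := by
        rw [abs_mul]
        nlinarith [abs_nonneg en]
      have key2 : |(x:ℝ)*en| ≤ |(x:ℝ)*en + (y:ℝ)*en1| := by
        rcases lt_trichotomy ((x:ℝ)*en) 0 with h1 | h1 | h1
        · have h2 : (y:ℝ)*en1 < 0 := by nlinarith
          rw [abs_of_neg h1, abs_of_neg (by linarith : (x:ℝ)*en + (y:ℝ)*en1 < 0)]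
          linarith
        · rw [h1]; simp; positivity
        · have h2 : 0 < (y:ℝ)*en1 := by nlinarith
          rw [abs_of_pos h1, abs_of_pos (by linarith : 0 < (x:ℝ)*en + (y:ℝ)*en1)]
          linarith
      linarith

lemma Lglobal : ∀ z P : ℤ, 1 ≤ z → ∃ n : ℕ, q n ≤ z ∧ z < q (n+1) ∧
    (1:ℝ)/(2*((z:ℝ)*(q (n+1):ℝ))) ≤ |θ - (P:ℝ)/(z:ℝ)| := by
  intro z P hz
  have hex : ∃ k : ℕ, z < q (k+1) := by
    refine ⟨z.toNat, ?_⟩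
    have h1 := L2 a q ha hq0 hq1 hqrec (z.toNat + 1)
    have h2 : ((z.toNat + 1 : ℕ) : ℤ) = z + 1 := by omega
    omega
  classical
  set n := Nat.find hex with hn
  have hup : z < q (n+1) := Nat.find_spec hex
  have hlow : q n ≤ z := by
    rcases Nat.eq_zero_or_pos n with h0 | h0
    · rw [h0, hq0]; exact hz
    · obtain ⟨m, hm⟩ := Nat.exists_eq_succ_of_ne_zero (by omega : n ≠ 0)
      have hmin : ¬ (z < q (m+1)) := Nat.find_min hex (by omega : m < n)
      rw [hm, Nat.succ_eq_add_one]
      omega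
  refine ⟨n, hlow, hup, ?_⟩
  have hzR : (0:ℝ) < (z:ℝ) := by exact_mod_cast lt_of_lt_of_le one_pos hz
  have hqn1 := Lqpos a q ha hq0 hq1 hqrec (n+1)
  have hba := LBA a p q θ ha hq0 hq1 hqrec hp0 hp1 hprec hconv n P z hz hup
  obtain ⟨hme, _⟩ := Me a p q θ ha hq0 hq1 hqrec hp0 hp1 hprec hconv n
  have h1 : (1:ℝ)/(2*(q (n+1):ℝ)) ≤ |(z:ℝ)*θ - (P:ℝ)| := by
    calc (1:ℝ)/(2*(q (n+1):ℝ)) ≤ (-1)^n * ((q n:ℝ)*θ - (p n:ℝ)) := le_of_lt hme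
      _ ≤ |(-1)^n * ((q n:ℝ)*θ - (p n:ℝ))| := le_abs_self _
      _ = |(q n:ℝ)*θ - (p n:ℝ)| := by rw [abs_mul, abs_pow, abs_neg, abs_one, one_pow, one_mul]
      _ ≤ |(z:ℝ)*θ - (P:ℝ)| := hba
  have h2 : θ - (P:ℝ)/(z:ℝ) = ((z:ℝ)*θ - (P:ℝ))/(z:ℝ) := by
    field_simp
    try ring
  rw [h2, abs_div, abs_of_pos hzR, div_le_div_iff₀ (by positivity) hzR]
  have hstep : ((1:ℝ)/(2*(q (n+1):ℝ))) * (2*((z:ℝ)*(q (n+1):ℝ))) = (z:ℝ) := by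
    field_simp
  have hmul := mul_le_mul_of_nonneg_right h1 (le_of_lt (by positivity : (0:ℝ) < 2*((z:ℝ)*(q (n+1):ℝ))))
  linarith [hmul, hstep]

lemma LclaimA (r : ℝ)
    (hfreq : ∃ᶠ n in Filter.atTop, 2 ≤ n ∧ (r - 2) * Real.log ((q n : ℤ) : ℝ) ≤ Real.log ((a (n+1) : ℤ) : ℝ)) :
    {zp : ℤ × ℤ | zp.1 ≠ 0 ∧
      |θ - (zp.2 : ℝ) / (zp.1 : ℝ)| ≤ |(zp.1 : ℝ)| ^ (-r)}.Infinite := by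
  have hT : {n : ℕ | 2 ≤ n ∧ (r - 2) * Real.log ((q n : ℤ) : ℝ) ≤ Real.log ((a (n+1) : ℤ) : ℝ)}.Infinite :=
    Nat.frequently_atTop_iff_infinite.mp hfreq
  have hinj : Set.InjOn (fun n => ((q n, p n) : ℤ × ℤ))
      {n : ℕ | 2 ≤ n ∧ (r - 2) * Real.log ((q n : ℤ) : ℝ) ≤ Real.log ((a (n+1) : ℤ) : ℝ)} := by
    intro m hm n hn heq
    have hqeq : q m = q n := congrArg Prod.fst heq
    rcases lt_trichotomy m n with h | h | h
    · exact absurd hqeq (ne_of_lt (Lstrict a q ha hq0 hq1 hqrec m n (by have := hm.1; omega) h))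
    · exact h
    · exact absurd hqeq.symm (ne_of_lt (Lstrict a q ha hq0 hq1 hqrec n m (by have := hn.1; omega) h))
  refine Set.Infinite.mono ?_ (Set.Infinite.image hinj hT)
  rintro zp ⟨n, ⟨hn2, hnlog⟩, rfl⟩
  simp only [Set.mem_setOf_eq]
  have hqpos := Lqpos a q ha hq0 hq1 hqrec n
  have hqn1pos := Lqpos a q ha hq0 hq1 hqrec (n+1)
  have hapos : (0:ℝ) < ((a (n+1) : ℤ) : ℝ) := by
    have := ha (n+1) (by omega); exact_mod_cast lt_of_lt_of_le one_pos (by exact_mod_cast this)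
  constructor
  · have := L1 a q ha hq0 hq1 hqrec n; omega
  · have hab : ((q n : ℤ):ℝ) ^ (r-2) ≤ ((a (n+1) : ℤ):ℝ) := by
      rw [Real.rpow_def_of_pos hqpos]
      calc Real.exp (Real.log ((q n : ℤ):ℝ) * (r-2)) ≤ Real.exp (Real.log ((a (n+1) : ℤ):ℝ)) := by
            apply Real.exp_le_exp.mpr
            linarith [hnlog]
        _ = ((a (n+1) : ℤ):ℝ) := Real.exp_log hapos
    have hL11R : ((a (n+1) : ℤ):ℝ) * ((q n : ℤ):ℝ) ≤ ((q (n+1) : ℤ):ℝ) := by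
      exact_mod_cast L11 a q ha hq0 hq1 hqrec n (by omega)
    have key : ((q n : ℤ):ℝ) ^ (r:ℝ) ≤ ((q n : ℤ):ℝ) * ((q (n+1) : ℤ):ℝ) := by
      have e1 : ((q n : ℤ):ℝ) ^ (r:ℝ) = ((q n : ℤ):ℝ)^(r-2) * ((q n : ℤ):ℝ)^((2:ℕ):ℝ) := by
        rw [← Real.rpow_add hqpos]; norm_num
      have e2 : ((q n : ℤ):ℝ)^((2:ℕ):ℝ) = ((q n : ℤ):ℝ) * ((q n : ℤ):ℝ) := by
        rw [Real.rpow_natCast]; ring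
      rw [e1, e2]
      calc ((q n : ℤ):ℝ)^(r-2) * (((q n : ℤ):ℝ) * ((q n : ℤ):ℝ))
          ≤ ((a (n+1) : ℤ):ℝ) * (((q n : ℤ):ℝ) * ((q n : ℤ):ℝ)) := by nlinarith [Real.rpow_pos_of_pos hqpos (r-2)]
        _ = (((a (n+1) : ℤ):ℝ) * ((q n : ℤ):ℝ)) * ((q n : ℤ):ℝ) := by ring
        _ ≤ ((q (n+1) : ℤ):ℝ) * ((q n : ℤ):ℝ) := by nlinarith
        _ = ((q n : ℤ):ℝ) * ((q (n+1) : ℤ):ℝ) := by ring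
    have habs : |θ - ((p n : ℤ):ℝ)/((q n : ℤ):ℝ)| ≤ 1/(((q n : ℤ):ℝ)*((q (n+1) : ℤ):ℝ)) := by
      obtain ⟨h1, h2⟩ := Mbound a p q θ ha hq0 hq1 hqrec hp0 hp1 hprec hconv n
      have heq2 : |θ - ((p n : ℤ):ℝ)/((q n : ℤ):ℝ)|
          = |(-1)^n * (θ - ((p n : ℤ):ℝ)/((q n : ℤ):ℝ))| := by
        rw [abs_mul, abs_pow, abs_neg, abs_one, one_pow, one_mul]
      rw [heq2, abs_of_pos (lt_trans (by positivity) h1)]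
      exact le_of_lt h2
    have hfin : (1:ℝ)/(((q n : ℤ):ℝ)*((q (n+1) : ℤ):ℝ)) ≤ ((q n : ℤ):ℝ) ^ (-r) := by
      rw [Real.rpow_neg (le_of_lt hqpos), ← one_div]
      exact one_div_le_one_div_of_le (Real.rpow_pos_of_pos hqpos r) key
    have habsq : |((q n : ℤ):ℝ)| = ((q n : ℤ):ℝ) := abs_of_pos hqpos
    calc |θ - ((p n : ℤ):ℝ)/((q n : ℤ):ℝ)| ≤ 1/(((q n : ℤ):ℝ)*((q (n+1) : ℤ):ℝ)) := habs
      _ ≤ ((q n : ℤ):ℝ) ^ (-r) := hfin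
      _ = |((q n : ℤ):ℝ)| ^ (-r) := by rw [habsq]

lemma LclaimB (γ : ℝ) (hγ : 2 < γ)
    (hinf : {zp : ℤ × ℤ | zp.1 ≠ 0 ∧
      |θ - (zp.2 : ℝ) / (zp.1 : ℝ)| ≤ |(zp.1 : ℝ)| ^ (-γ)}.Infinite) :
    ∀ N : ℕ, ∃ n : ℕ, N ≤ n ∧ ((q n : ℤ):ℝ) ^ (γ-2) ≤ 4 * ((a (n+1) : ℤ):ℝ) := by
  intro N
  set B : ℤ := q (N+1) with hB
  have hB1 : 1 ≤ B := L1 a q ha hq0 hq1 hqrec (N+1)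
  obtain ⟨zp, hzpmem, hzpbig⟩ : ∃ zp ∈ {zp : ℤ × ℤ | zp.1 ≠ 0 ∧
      |θ - (zp.2 : ℝ) / (zp.1 : ℝ)| ≤ |(zp.1 : ℝ)| ^ (-γ)}, B < |zp.1| := by
    by_contra hcon
    push_neg at hcon
    set C : ℤ := B * ⌈|θ| + 1⌉ with hC
    apply hinf
    apply Set.Finite.subset ((Set.finite_Icc (-B) B).prod (Set.finite_Icc (-C) C))
    rintro ⟨z, P⟩ ⟨hz0, hle⟩
    have hzB : |z| ≤ B := hcon (z, P) ⟨hz0, hle⟩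
    have hz1R : (1:ℝ) ≤ |(z:ℝ)| := by
      have := Int.one_le_abs hz0
      rw [← Int.cast_abs]; exact_mod_cast this
    have hrp : |(z:ℝ)| ^ (-γ) ≤ 1 :=
      Real.rpow_le_one_of_one_le_of_nonpos hz1R (by linarith)
    have h1 : |θ - (P:ℝ)/(z:ℝ)| ≤ 1 := le_trans hle hrp
    have h2 : |(P:ℝ)/(z:ℝ)| ≤ |θ| + 1 := by
      have := abs_sub_abs_le_abs_sub ((P:ℝ)/(z:ℝ)) θ
      rw [abs_sub_comm] at this
      linarith
    have h3 : |(P:ℝ)| ≤ (|θ| + 1) * |(z:ℝ)| := by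
      rw [abs_div] at h2
      have hzpos : (0:ℝ) < |(z:ℝ)| := lt_of_lt_of_le one_pos hz1R
      exact (div_le_iff₀ hzpos).mp h2
    have h4 : |P| ≤ C := by
      have hPC : ((|P|:ℤ):ℝ) ≤ ((C:ℤ):ℝ) := by
        rw [Int.cast_abs]
        calc |(P:ℝ)| ≤ (|θ| + 1) * |(z:ℝ)| := h3
          _ ≤ (|θ| + 1) * (B:ℝ) := by
              have : |(z:ℝ)| ≤ (B:ℝ) := by rw [← Int.cast_abs]; exact_mod_cast hzB
              nlinarith [abs_nonneg θ]
          _ ≤ (⌈|θ| + 1⌉ : ℝ) * (B:ℝ) := by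
              have h5 := Int.le_ceil (|θ| + 1)
              have hBR : (0:ℝ) ≤ (B:ℝ) := by exact_mod_cast le_trans zero_le_one hB1
              nlinarith
          _ = ((C:ℤ):ℝ) := by rw [hC]; push_cast; ring
      exact_mod_cast hPC
    refine ⟨?_, ?_⟩
    · simp only [Set.mem_Icc]; exact abs_le.mp hzB
    · simp only [Set.mem_Icc]; exact abs_le.mp h4
  obtain ⟨z, P0⟩ := zp
  obtain ⟨hz0, hle⟩ := hzpmem
  simp only at hz0 hle hzpbig
  set w : ℤ := |z| with hw
  have hw1 : 1 ≤ w := Int.one_le_abs hz0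
  have hwR : ((w:ℤ):ℝ) = |(z:ℝ)| := by rw [hw, Int.cast_abs]
  obtain ⟨P, hfrac⟩ : ∃ P : ℤ, (P0:ℝ)/(z:ℝ) = (P:ℝ)/((w:ℤ):ℝ) := by
    rcases lt_or_gt_of_ne hz0 with hneg | hpos
    · refine ⟨-P0, ?_⟩
      have : w = -z := by rw [hw, abs_of_neg hneg]
      rw [this]
      push_cast
      rw [neg_div_neg_eq]
    · refine ⟨P0, ?_⟩
      have : w = z := by rw [hw, abs_of_pos hpos]
      rw [this]
  obtain ⟨n, hqle, hqlt, hlb⟩ := Lglobal a p q θ ha hq0 hq1 hqrec hp0 hp1 hprec hconv w P hw1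
  have hnN : N ≤ n := by
    by_contra hcon
    have : q (n+1) ≤ q (N+1) := Lmono a q ha hq0 hq1 hqrec (n+1) (N+1) (by omega)
    omega
  refine ⟨n, hnN, ?_⟩
  have hqpos := Lqpos a q ha hq0 hq1 hqrec n
  have hqn1pos := Lqpos a q ha hq0 hq1 hqrec (n+1)
  have hwpos : (0:ℝ) < ((w:ℤ):ℝ) := by exact_mod_cast lt_of_lt_of_le one_pos hw1
  have hub : |θ - (P:ℝ)/((w:ℤ):ℝ)| ≤ ((w:ℤ):ℝ) ^ (-γ) := by
    rw [← hfrac, hwR]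
    exact hle
  have hcomb : (1:ℝ)/(2*(((w:ℤ):ℝ)*((q (n+1) : ℤ):ℝ))) ≤ ((w:ℤ):ℝ) ^ (-γ) :=
    le_trans hlb hub
  have hwγ : ((w:ℤ):ℝ) ^ (γ:ℝ) ≤ 2*(((w:ℤ):ℝ)*((q (n+1) : ℤ):ℝ)) := by
    rw [Real.rpow_neg (le_of_lt hwpos), ← one_div] at hcomb
    have hp1' : (0:ℝ) < ((w:ℤ):ℝ) ^ (γ:ℝ) := Real.rpow_pos_of_pos hwpos γ
    have hp2' : (0:ℝ) < 2*(((w:ℤ):ℝ)*((q (n+1) : ℤ):ℝ)) := by positivity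
    rw [div_le_div_iff₀ hp2' hp1'] at hcomb
    nlinarith [hcomb]
  have hsplit : ((w:ℤ):ℝ) ^ (γ:ℝ) = ((w:ℤ):ℝ) ^ (γ-1) * ((w:ℤ):ℝ) := by
    conv_lhs => rw [show (γ:ℝ) = (γ-1)+1 by ring]
    rw [Real.rpow_add hwpos, Real.rpow_one]
  have hwg1 : ((w:ℤ):ℝ) ^ (γ-1) ≤ 2*((q (n+1) : ℤ):ℝ) := by
    rw [hsplit] at hwγ
    nlinarith [hwγ, hwpos, Real.rpow_pos_of_pos hwpos (γ-1)]
  have hqw : ((q n : ℤ):ℝ) ≤ ((w:ℤ):ℝ) := by exact_mod_cast hqle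
  have hqg1 : ((q n : ℤ):ℝ) ^ (γ-1) ≤ 2*((q (n+1) : ℤ):ℝ) :=
    le_trans (Real.rpow_le_rpow (le_of_lt hqpos) hqw (by linarith)) hwg1
  have hL12R : ((q (n+1) : ℤ):ℝ) ≤ 2 * ((a (n+1) : ℤ):ℝ) * ((q n : ℤ):ℝ) := by
    exact_mod_cast L12 a q ha hq0 hq1 hqrec n
  have hsplit2 : ((q n : ℤ):ℝ) ^ (γ-1) = ((q n : ℤ):ℝ) ^ (γ-2) * ((q n : ℤ):ℝ) := by
    conv_lhs => rw [show (γ-1:ℝ) = (γ-2)+1 by ring]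
    rw [Real.rpow_add hqpos, Real.rpow_one]
  have hfin : ((q n : ℤ):ℝ) ^ (γ-2) * ((q n : ℤ):ℝ) ≤ 4 * ((a (n+1) : ℤ):ℝ) * ((q n : ℤ):ℝ) := by
    rw [← hsplit2]
    calc ((q n : ℤ):ℝ) ^ (γ-1) ≤ 2*((q (n+1) : ℤ):ℝ) := hqg1
      _ ≤ 2*(2 * ((a (n+1) : ℤ):ℝ) * ((q n : ℤ):ℝ)) := by linarith
      _ = 4 * ((a (n+1) : ℤ):ℝ) * ((q n : ℤ):ℝ) := by ring
  nlinarith [hfin, hqpos, Real.rpow_pos_of_pos hqpos (γ-2)]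

end RealAux


/-- The irrationality measure `μ(θ)`. -/
def irrMeasure (θ : ℝ) : EReal :=
  sSup {g : EReal | ∃ γ : ℝ, g = (γ : EReal) ∧
    {zp : ℤ × ℤ | zp.1 ≠ 0 ∧
      |θ - (zp.2 : ℝ) / (zp.1 : ℝ)| ≤ |(zp.1 : ℝ)| ^ (-γ)}.Infinite}

/-- If `θ` is irrational with regular continued fraction expansion
`θ = [a₀; a₁, a₂, …]` and convergents `pₙ/qₙ` (given by the standard recurrences
and converging to `θ`), then `μ(θ) = 2 + limsup_n (log a_{n+1})/(log qₙ)`. -/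
theorem stmt_8 (θ : ℝ) (hθ : Irrational θ)
    (a : ℕ → ℤ) (ha : ∀ n, 1 ≤ n → 1 ≤ a n)
    (p q : ℕ → ℤ)
    (hq0 : q 0 = 1) (hq1 : q 1 = a 1)
    (hqrec : ∀ n, q (n + 2) = a (n + 2) * q (n + 1) + q n)
    (hp0 : p 0 = a 0) (hp1 : p 1 = a 1 * a 0 + 1)
    (hprec : ∀ n, p (n + 2) = a (n + 2) * p (n + 1) + p n)
    (hconv : Filter.Tendsto (fun n => (p n : ℝ) / (q n : ℝ)) Filter.atTop (nhds θ)) :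
    irrMeasure θ =
      2 + Filter.limsup
        (fun n => ((Real.log (a (n + 1)) / Real.log (q n) : ℝ) : EReal))
        Filter.atTop := by
  classical
  set f : ℕ → EReal := fun n => ((Real.log ((a (n + 1) : ℤ) : ℝ) / Real.log ((q n : ℤ) : ℝ) : ℝ) : EReal) with hf
  set L : EReal := Filter.limsup f Filter.atTop with hLdef
  have hqR1 : ∀ n, (1:ℝ) ≤ ((q n : ℤ) : ℝ) := by
    intro n; exact_mod_cast L1 a q ha hq0 hq1 hqrec n
  have hqRn : ∀ n : ℕ, (n : ℝ) ≤ ((q n : ℤ) : ℝ) := by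
    intro n; exact_mod_cast L2 a q ha hq0 hq1 hqrec n
  have haR1 : ∀ n, 1 ≤ n → (1:ℝ) ≤ ((a n : ℤ) : ℝ) := by
    intro n hn; exact_mod_cast ha n hn
  have hlogq_pos : ∀ n : ℕ, 2 ≤ n → 0 < Real.log ((q n : ℤ) : ℝ) := by
    intro n hn
    apply Real.log_pos
    calc (1:ℝ) < 2 := one_lt_two
      _ ≤ (n:ℝ) := by exact_mod_cast hn
      _ ≤ ((q n : ℤ) : ℝ) := hqRn n
  have hx_nonneg : ∀ n : ℕ, 2 ≤ n → (0:ℝ) ≤ Real.log ((a (n + 1) : ℤ) : ℝ) / Real.log ((q n : ℤ) : ℝ) := by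
    intro n hn
    exact div_nonneg (Real.log_nonneg (haR1 (n+1) (by omega))) (le_of_lt (hlogq_pos n hn))
  have hL0 : (0:EReal) ≤ L := by
    refine Filter.le_limsup_of_frequently_le ?_ (by isBoundedDefault)
    refine ((Filter.eventually_ge_atTop 2).mono ?_).frequently
    intro n hn
    have h := hx_nonneg n hn
    simp only [hf]
    exact_mod_cast h
  have htend : Filter.Tendsto (fun n : ℕ => Real.log ((q n : ℤ) : ℝ)) Filter.atTop Filter.atTop :=
    Real.tendsto_log_atTop.comp (Filter.tendsto_atTop_mono hqRn tendsto_natCast_atTop_atTop)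
  have h2coe : (2:EReal) = ((2:ℝ):EReal) := by norm_cast
  rw [irrMeasure]
  apply le_antisymm
  · apply sSup_le
    rintro g ⟨γ, rfl, hinfγ⟩
    refine EReal.le_of_forall_lt_iff_le.mp ?_
    intro s hs
    have h2L : (2:EReal) ≤ 2 + L := by
      calc (2:EReal) = 2 + 0 := by rw [add_zero]
        _ ≤ 2 + L := add_le_add_right hL0 2
    have hs2 : (2:ℝ) < s := by
      have h := lt_of_le_of_lt h2L hs
      rw [h2coe] at h
      exact_mod_cast h
    rcases le_or_gt γ s with hγs | hγs
    · exact EReal.coe_le_coe_iff.mpr hγs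
    · exfalso
      have hγ2 : 2 < γ := lt_trans hs2 hγs
      have hfreqB := LclaimB a p q θ ha hq0 hq1 hqrec hp0 hp1 hprec hconv γ hγ2 hinfγ
      have hfreq : ∃ᶠ n in Filter.atTop, ((q n : ℤ):ℝ)^(γ-2) ≤ 4*((a (n+1) : ℤ):ℝ) :=
        Filter.frequently_atTop.mpr (fun N => by
          obtain ⟨n, hn1, hn2⟩ := hfreqB N; exact ⟨n, hn1, hn2⟩)
      have hev : ∀ᶠ n in Filter.atTop,
          Real.log 4 ≤ (γ - s) * Real.log ((q n : ℤ):ℝ) ∧ 2 ≤ n := by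
        filter_upwards [htend.eventually_ge_atTop (Real.log 4 / (γ - s)),
          Filter.eventually_ge_atTop 2] with n hn hn2
        refine ⟨?_, hn2⟩
        rw [div_le_iff₀ (by linarith : (0:ℝ) < γ - s)] at hn
        linarith
      have hfreq2 : ∃ᶠ n in Filter.atTop, ((s - 2 : ℝ):EReal) ≤ f n := by
        refine (hfreq.and_eventually hev).mono ?_
        rintro n ⟨hb, hlog4, hn2⟩
        have hqpos : (0:ℝ) < ((q n : ℤ):ℝ) := lt_of_lt_of_le one_pos (hqR1 n)
        have hlogqpos := hlogq_pos n hn2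
        have hapos : (0:ℝ) < ((a (n+1) : ℤ):ℝ) := lt_of_lt_of_le one_pos (haR1 (n+1) (by omega))
        have hlog : (γ-2) * Real.log ((q n : ℤ):ℝ)
            ≤ Real.log 4 + Real.log ((a (n+1) : ℤ):ℝ) := by
          have h := Real.log_le_log (Real.rpow_pos_of_pos hqpos (γ-2)) hb
          rwa [Real.log_rpow hqpos, Real.log_mul (by norm_num) (ne_of_gt hapos)] at h
        have hxge : s - 2 ≤ Real.log ((a (n+1) : ℤ):ℝ) / Real.log ((q n : ℤ):ℝ) := by
          rw [le_div_iff₀ hlogqpos]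
          have hring : (s-2) * Real.log ((q n : ℤ):ℝ)
              = (γ-2) * Real.log ((q n : ℤ):ℝ) - (γ-s) * Real.log ((q n : ℤ):ℝ) := by ring
          linarith [hring, hlog, hlog4]
        simp only [hf]
        exact_mod_cast hxge
      have hsle : ((s-2:ℝ):EReal) ≤ L :=
        Filter.le_limsup_of_frequently_le hfreq2 (by isBoundedDefault)
      have hcontra : (s:EReal) ≤ 2 + L := by
        calc (s:EReal) = (2:EReal) + ((s-2:ℝ):EReal) := by
              rw [h2coe, ← EReal.coe_add]; norm_num
          _ ≤ 2 + L := add_le_add_right hsle 2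
      exact absurd hs (not_lt.mpr hcontra)
  · refine EReal.ge_of_forall_gt_iff_ge.mp ?_
    intro r hr
    have hfreqA : ∃ᶠ n in Filter.atTop, 2 ≤ n ∧
        (r - 2) * Real.log ((q n : ℤ):ℝ) ≤ Real.log ((a (n+1) : ℤ):ℝ) := by
      rcases le_or_gt r 2 with hr2 | hr2
      · refine ((Filter.eventually_ge_atTop 2).mono ?_).frequently
        intro n hn2
        refine ⟨hn2, ?_⟩
        have h1 := hlogq_pos n hn2
        have h2 : (0:ℝ) ≤ Real.log ((a (n+1) : ℤ):ℝ) := Real.log_nonneg (haR1 (n+1) (by omega))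
        nlinarith
      · have hrL : ((r-2:ℝ):EReal) < L := by
          by_contra hc
          push_neg at hc
          have hge : 2 + L ≤ (r:EReal) := by
            calc 2 + L ≤ (2:EReal) + ((r-2:ℝ):EReal) := add_le_add_right hc 2
              _ = (r:EReal) := by rw [h2coe, ← EReal.coe_add]; norm_num
          exact absurd hr (not_lt.mpr hge)
        have hfr : ∃ᶠ n in Filter.atTop, ((r-2:ℝ):EReal) < f n :=
          Filter.frequently_lt_of_lt_limsup (by isBoundedDefault) hrL
        refine (hfr.and_eventually (Filter.eventually_ge_atTop 2)).mono ?_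
        rintro n ⟨hlt, hn2⟩
        have hxlt : r - 2 < Real.log ((a (n+1) : ℤ):ℝ) / Real.log ((q n : ℤ):ℝ) := by
          simp only [hf] at hlt
          exact_mod_cast hlt
        refine ⟨hn2, ?_⟩
        have hlogqpos := hlogq_pos n hn2
        exact le_of_lt ((lt_div_iff₀ hlogqpos).mp hxlt)
    have hinfr := LclaimA a p q θ ha hq0 hq1 hqrec hp0 hp1 hprec hconv r hfreqA
    exact le_sSup ⟨r, rfl, hinfr⟩

end
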